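/- Let β ∈ (0,∞) and 0 ≤ m ≤ x, and let U(1), U(2) be independent Unif([0,1]) random variables. Define r = 𝟙(U(1) ≤ ((1+m)/(1+x))^β) and φ(x,U(1),U(2),m) = r·(1+m)U(2)^{1/β} + (1−r)·(1+x)U(1)^{1/β}. Then φ(x,U(1),U(2),m) has the same distribution as (1+x)U^{1/β} for U ∼ Unif([0,1]); that is, the new update function is a valid update function for the Markov chain X_{t+1} = U_{t+1}^{1/β}(1 + X_t). -/

import Mathlib

open MeasureTheory ProbabilityTheory

lemma unif_Iic (s : ℝ) :
    (volume.restrict (Set.Icc (0:ℝ) 1)) (Set.Iic s) = ENNReal.ofReal (min s 1) := by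
  rw [Measure.restrict_apply measurableSet_Iic]
  have h : Set.Iic s ∩ Set.Icc (0:ℝ) 1 = Set.Icc 0 (min s 1) := by
    ext y
    simp only [Set.mem_inter_iff, Set.mem_Iic, Set.mem_Icc, le_min_iff]
    tauto
  rw [h, Real.volume_Icc, sub_zero]

/-- Core lemma: if `U1, U2` are iid Unif[0,1] and `0 < p ≤ 1`, then
`V = if U1 ≤ p then p·U2 else U1` is Unif[0,1]. -/
lemma core_unif {Ω : Type*} [MeasureSpace Ω] [IsProbabilityMeasure (ℙ : Measure Ω)]
    (p : ℝ) (hp0 : 0 < p) (hp1 : p ≤ 1)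
    (U1 U2 : Ω → ℝ) (hU1 : Measurable U1) (hU2 : Measurable U2)
    (law1 : Measure.map U1 ℙ = volume.restrict (Set.Icc (0:ℝ) 1))
    (law2 : Measure.map U2 ℙ = volume.restrict (Set.Icc (0:ℝ) 1))
    (hind : IndepFun U1 U2 ℙ) :
    Measure.map (fun ω => if U1 ω ≤ p then p * U2 ω else U1 ω) ℙ
      = volume.restrict (Set.Icc (0:ℝ) 1) := by
  have hVmeas : Measurable (fun ω => if U1 ω ≤ p then p * U2 ω else U1 ω) :=
    Measurable.ite (hU1 measurableSet_Iic) (hU2.const_mul p) hU1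
  refine Measure.ext_of_Iic _ _ (fun t => ?_)
  rw [Measure.map_apply hVmeas measurableSet_Iic, unif_Iic]
  have hset : (fun ω => if U1 ω ≤ p then p * U2 ω else U1 ω) ⁻¹' Set.Iic t
      = (U1 ⁻¹' Set.Iic p ∩ U2 ⁻¹' Set.Iic (t / p)) ∪ U1 ⁻¹' Set.Ioc p t := by
    ext ω
    simp only [Set.mem_preimage, Set.mem_Iic, Set.mem_inter_iff, Set.mem_union, Set.mem_Ioc]
    by_cases h : U1 ω ≤ p
    · simp only [h, if_true, true_and]
      have hdiv : p * U2 ω ≤ t ↔ U2 ω ≤ t / p := by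
        rw [le_div_iff₀ hp0, mul_comm]
      constructor
      · intro hle; exact Or.inl (hdiv.mp hle)
      · rintro (hle | ⟨hlt, _⟩)
        · exact hdiv.mpr hle
        · exact absurd h (not_le.mpr hlt)
    · simp only [h, if_false, false_and, false_or]
      exact ⟨fun hle => ⟨not_le.mp h, hle⟩, fun ⟨_, hle⟩ => hle⟩
  rw [hset, measure_union _ (hU1 measurableSet_Ioc)]
  swap
  · refine Set.disjoint_left.mpr ?_
    rintro ω ⟨h1, _⟩ h2
    exact absurd h1 (not_le.mpr h2.1)
  rw [hind.measure_inter_preimage_eq_mul _ _ measurableSet_Iic measurableSet_Iic]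
  rw [← Measure.map_apply hU1 measurableSet_Iic, ← Measure.map_apply hU2 measurableSet_Iic,
    ← Measure.map_apply hU1 measurableSet_Ioc, law1, law2, unif_Iic, unif_Iic]
  have hIoc : (volume.restrict (Set.Icc (0:ℝ) 1)) (Set.Ioc p t)
      = ENNReal.ofReal (min t 1 - p) := by
    rw [Measure.restrict_apply measurableSet_Ioc]
    have h : Set.Ioc p t ∩ Set.Icc (0:ℝ) 1 = Set.Ioc p (min t 1) := by
      ext y
      simp only [Set.mem_inter_iff, Set.mem_Ioc, Set.mem_Icc, le_min_iff]
      constructor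
      · rintro ⟨⟨h1, h2⟩, h3, h4⟩; exact ⟨h1, h2, h4⟩
      · rintro ⟨h1, h2, h3⟩; exact ⟨⟨h1, h2⟩, le_of_lt (lt_of_le_of_lt hp0.le h1), h3⟩
    rw [h, Real.volume_Ioc]
  rw [hIoc, min_eq_left hp1]
  rcases le_or_gt t p with htp | hpt
  · -- t ≤ p : second term vanishes
    have h1 : min (t / p) 1 = t / p := min_eq_left ((div_le_one hp0).mpr htp)
    have h2 : min t 1 = t := min_eq_left (htp.trans hp1)
    rw [h1, h2, ENNReal.ofReal_of_nonpos (show t - p ≤ 0 by linarith), add_zero,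
      ← ENNReal.ofReal_mul hp0.le, mul_div_cancel₀ _ hp0.ne']
  · -- p < t
    have h1 : min (t / p) 1 = 1 := min_eq_right ((one_le_div hp0).mpr hpt.le)
    have h2 : p ≤ min t 1 := le_min hpt.le hp1
    rw [h1, ENNReal.ofReal_one, mul_one, ← ENNReal.ofReal_add hp0.le (by linarith),
      add_sub_cancel]

/-- For `β > 0`, `0 ≤ m ≤ x` and independent `U(1), U(2) ~ Unif([0,1])`, the new
update `φ(x,U(1),U(2),m) = r·(1+m)·U(2)^(1/β) + (1−r)·(1+x)·U(1)^(1/β)` with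
`r = 𝟙(U(1) ≤ ((1+m)/(1+x))^β)` has the same distribution as
`(1+x)·U^(1/β)` for `U ~ Unif([0,1])`. -/
theorem update_function_valid_new
    {Ω : Type*} [MeasureSpace Ω] [IsProbabilityMeasure (ℙ : Measure Ω)]
    (β : ℝ) (hβ : 0 < β) (m x : ℝ) (hm : 0 ≤ m) (hmx : m ≤ x)
    (U1 U2 : Ω → ℝ) (hU1 : Measurable U1) (hU2 : Measurable U2)
    (law1 : Measure.map U1 ℙ = volume.restrict (Set.Icc (0:ℝ) 1))
    (law2 : Measure.map U2 ℙ = volume.restrict (Set.Icc (0:ℝ) 1))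
    (hind : IndepFun U1 U2 ℙ) :
    Measure.map (fun ω =>
        (if U1 ω ≤ ((1 + m) / (1 + x)) ^ β then (1:ℝ) else 0)
            * (1 + m) * (U2 ω) ^ (1/β)
        + (1 - if U1 ω ≤ ((1 + m) / (1 + x)) ^ β then (1:ℝ) else 0)
            * (1 + x) * (U1 ω) ^ (1/β)) ℙ
      = Measure.map (fun u : ℝ => (1 + x) * u ^ (1/β))
          (volume.restrict (Set.Icc (0:ℝ) 1)) := by
  have hm1 : (0:ℝ) < 1 + m := by linarith
  have hx1 : (0:ℝ) < 1 + x := by linarith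
  set c : ℝ := (1 + m) / (1 + x) with hc
  have hc0 : 0 < c := div_pos hm1 hx1
  have hc1 : c ≤ 1 := (div_le_one hx1).mpr (by linarith)
  set p : ℝ := c ^ β with hpdef
  have hp0 : 0 < p := Real.rpow_pos_of_pos hc0 β
  have hp1 : p ≤ 1 := Real.rpow_le_one hc0.le hc1 hβ.le
  have hproot : p ^ (1/β) = c := by
    rw [hpdef, ← Real.rpow_mul hc0.le, mul_one_div, div_self hβ.ne', Real.rpow_one]
  -- a.e., U2 ω ∈ [0,1]
  have hU2mem : ∀ᵐ ω ∂(ℙ : Measure Ω), U2 ω ∈ Set.Icc (0:ℝ) 1 := by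
    rw [ae_iff]
    have hs : {ω | ¬ U2 ω ∈ Set.Icc (0:ℝ) 1} = U2 ⁻¹' (Set.Icc (0:ℝ) 1)ᶜ := rfl
    rw [hs, ← Measure.map_apply hU2 measurableSet_Icc.compl, law2,
      Measure.restrict_apply measurableSet_Icc.compl, Set.compl_inter_self, measure_empty]
  -- the update equals h ∘ V a.e.
  have hae : (fun ω =>
        (if U1 ω ≤ p then (1:ℝ) else 0) * (1 + m) * (U2 ω) ^ (1/β)
        + (1 - if U1 ω ≤ p then (1:ℝ) else 0) * (1 + x) * (U1 ω) ^ (1/β))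
      =ᵐ[(ℙ : Measure Ω)]
      (fun u : ℝ => (1 + x) * u ^ (1/β)) ∘ (fun ω => if U1 ω ≤ p then p * U2 ω else U1 ω) := by
    filter_upwards [hU2mem] with ω hω
    simp only [Function.comp_apply]
    by_cases h : U1 ω ≤ p
    · simp only [if_pos h]
      rw [Real.mul_rpow hp0.le hω.1, hproot, hc]
      field_simp
      ring
    · simp only [if_neg h]
      ring
  have hVmeas : Measurable (fun ω => if U1 ω ≤ p then p * U2 ω else U1 ω) :=
    Measurable.ite (hU1 measurableSet_Iic) (hU2.const_mul p) hU1
  have hhmeas : Measurable (fun u : ℝ => (1 + x) * u ^ (1/β)) :=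
    ((Real.continuous_rpow_const (by positivity)).measurable).const_mul _
  calc Measure.map (fun ω =>
        (if U1 ω ≤ p then (1:ℝ) else 0) * (1 + m) * (U2 ω) ^ (1/β)
        + (1 - if U1 ω ≤ p then (1:ℝ) else 0) * (1 + x) * (U1 ω) ^ (1/β)) ℙ
      = Measure.map ((fun u : ℝ => (1 + x) * u ^ (1/β)) ∘
          (fun ω => if U1 ω ≤ p then p * U2 ω else U1 ω)) ℙ := Measure.map_congr hae
    _ = Measure.map (fun u : ℝ => (1 + x) * u ^ (1/β))
          (Measure.map (fun ω => if U1 ω ≤ p then p * U2 ω else U1 ω) ℙ) :=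
        (Measure.map_map hhmeas hVmeas).symm
    _ = Measure.map (fun u : ℝ => (1 + x) * u ^ (1/β))
          (volume.restrict (Set.Icc (0:ℝ) 1)) := by
        rw [core_unif p hp0 hp1 U1 U2 hU1 hU2 law1 law2 hind]
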